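/- Define the operator L̃u = −u'' − (2/3)·Q̃³·u. Then: (i) the bounded odd function H̃ satisfies L̃H̃ = 0, i.e. H̃''(x) + (2/3)·Q̃(x)³·H̃(x) = 0 for all x ∈ ℝ, and H̃ has exactly one zero (at x = 0); (ii) the function Ĥ(x) = (3x + 2·α⁻¹(x))·H̃(x) − 4 also satisfies L̃Ĥ = 0, the Wronskian is constant with H̃(x)·Ĥ'(x) − Ĥ(x)·H̃'(x) = 3 for all x ∈ ℝ, and Ĥ(x) → +∞ as x → +∞. -/

import Mathlib

open Real MeasureTheory Filter

noncomputable def Qs (x : ℝ) : ℝ := (3/2) * (1 / Real.cosh (x/2))^2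
noncomputable def Hs (x : ℝ) : ℝ := Real.tanh (x/2)
noncomputable def alphaFn (x : ℝ) : ℝ := (1/3) * (Real.sinh x + x)
noncomputable def alphaInv : ℝ → ℝ := Function.invFun alphaFn
noncomputable def Qt (x : ℝ) : ℝ := Qs (alphaInv x)
noncomputable def Ht (x : ℝ) : ℝ := Hs (alphaInv x)
noncomputable def Vpot (x : ℝ) : ℝ := 2 * (Qt x)^2 * (1 - Qt x)

lemma alpha_strictMono : StrictMono alphaFn := by
  intro a b h
  have := Real.sinh_lt_sinh.mpr h
  simp only [alphaFn]; linarith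

lemma alpha_surjective : Function.Surjective alphaFn := by
  have hc : Continuous alphaFn := by
    unfold alphaFn
    exact continuous_const.mul (Real.continuous_sinh.add continuous_id)
  apply hc.surjective
  · apply tendsto_atTop_mono' atTop (f₁ := fun x => (1/3 : ℝ) * x)
    · filter_upwards [eventually_ge_atTop (0:ℝ)] with x hx
      have : 0 ≤ Real.sinh x := Real.sinh_nonneg_iff.mpr hx
      simp only [alphaFn]; linarith
    · exact Filter.Tendsto.const_mul_atTop (by norm_num) tendsto_id
  · apply tendsto_atBot_mono' atBot (f₁ := fun x => (1/3 : ℝ) * x)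
    · filter_upwards [eventually_le_atBot (0:ℝ)] with x hx
      have : Real.sinh x ≤ 0 := by simpa using Real.sinh_le_sinh.mpr hx
      simp only [alphaFn]; linarith
    · exact Filter.Tendsto.const_mul_atBot (by norm_num) tendsto_id

lemma alpha_right (x : ℝ) : alphaFn (alphaInv x) = x :=
  Function.rightInverse_invFun alpha_surjective x

lemma alpha_left (x : ℝ) : alphaInv (alphaFn x) = x :=
  Function.leftInverse_invFun alpha_strictMono.injective x

lemma alphaInv_continuous : Continuous alphaInv := by
  have h : alphaInv = (StrictMono.orderIsoOfSurjective alphaFn alpha_strictMono alpha_surjective).symm := by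
    funext x
    apply alpha_strictMono.injective
    rw [alpha_right]
    exact ((StrictMono.orderIsoOfSurjective alphaFn alpha_strictMono alpha_surjective).apply_symm_apply x).symm
  rw [h]
  exact OrderIso.continuous _

lemma cosh_half_ne (y : ℝ) : Real.cosh (y/2) ≠ 0 := (Real.cosh_pos _).ne'

lemma Qt_eq (x : ℝ) : Qt x = (3/2) * (1 / Real.cosh (alphaInv x / 2))^2 := rfl

lemma Ht_eq (x : ℝ) : Ht x = Real.sinh (alphaInv x / 2) / Real.cosh (alphaInv x / 2) := by
  simp [Ht, Hs, Real.tanh_eq_sinh_div_cosh]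

lemma alphaInv_hasDerivAt (x : ℝ) : HasDerivAt alphaInv (Qt x) x := by
  have h1 : HasDerivAt alphaFn ((1/3) * (Real.cosh (alphaInv x) + 1)) (alphaInv x) := by
    have h := ((Real.hasDerivAt_sinh (alphaInv x)).add (hasDerivAt_id (alphaInv x))).const_mul (1/3 : ℝ)
    exact h
  have hne : ((1/3 : ℝ) * (Real.cosh (alphaInv x) + 1)) ≠ 0 := by positivity
  have := HasDerivAt.of_local_left_inverse (alphaInv_continuous.continuousAt) h1 hne
      (Filter.Eventually.of_forall alpha_right)
  refine this.congr_deriv ?_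
  have hc : Real.cosh (alphaInv x) = 2 * Real.cosh (alphaInv x / 2)^2 - 1 := by
    have h1 := Real.cosh_two_mul (alphaInv x / 2)
    have h2 := Real.sinh_sq (alphaInv x / 2)
    have h3 : (2:ℝ) * (alphaInv x / 2) = alphaInv x := by ring
    rw [h3] at h1
    linarith
  rw [Qt_eq, hc]
  all_goals
    have hcn := cosh_half_ne (alphaInv x)
    field_simp
    try ring

lemma Ht_hasDerivAt (x : ℝ) : HasDerivAt Ht ((Qt x)^2/3) x := by
  have h2 : HasDerivAt (fun y => alphaInv y / 2) (Qt x / 2) x := (alphaInv_hasDerivAt x).div_const 2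
  have hs : HasDerivAt (fun y => Real.sinh (alphaInv y / 2)) (Real.cosh (alphaInv x / 2) * (Qt x / 2)) x :=
    (Real.hasDerivAt_sinh _).comp x h2
  have hc : HasDerivAt (fun y => Real.cosh (alphaInv y / 2)) (Real.sinh (alphaInv x / 2) * (Qt x / 2)) x :=
    (Real.hasDerivAt_cosh _).comp x h2
  have := hs.div hc (cosh_half_ne _)
  have heq : ((fun y => Real.sinh (alphaInv y / 2)) / (fun y => Real.cosh (alphaInv y / 2))) = Ht := by
    funext y; simp only [Pi.div_apply, Ht_eq]
  rw [heq] at this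
  refine this.congr_deriv ?_
  have hne := cosh_half_ne (alphaInv x)
  have hpy := Real.cosh_sq_sub_sinh_sq (alphaInv x / 2)
  rw [Qt_eq]
  field_simp
  nlinarith [hpy]

lemma Qt_hasDerivAt (x : ℝ) : HasDerivAt Qt (-((Qt x)^2 * Ht x)) x := by
  have h2 : HasDerivAt (fun y => alphaInv y / 2) (Qt x / 2) x := (alphaInv_hasDerivAt x).div_const 2
  have hc : HasDerivAt (fun y => Real.cosh (alphaInv y / 2)) (Real.sinh (alphaInv x / 2) * (Qt x / 2)) x :=
    (Real.hasDerivAt_cosh _).comp x h2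
  have hinv := hc.inv (cosh_half_ne _)
  have := ((hinv.pow 2).const_mul (3/2 : ℝ))
  have heq : (fun y => (3/2 : ℝ) * ((fun y => Real.cosh (alphaInv y / 2))⁻¹ ^ 2) y) = Qt := by
    funext y; rw [Qt_eq]; simp only [Pi.pow_apply, Pi.inv_apply]; ring
  rw [heq] at this
  refine this.congr_deriv ?_
  have hne := cosh_half_ne (alphaInv x)
  norm_num only [Pi.inv_apply]
  rw [Qt_eq, Ht_eq]
  field_simp

lemma pythag (x : ℝ) : (Ht x)^2 = 1 - (2/3) * Qt x := by
  have hne := cosh_half_ne (alphaInv x)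
  have hpy := Real.cosh_sq_sub_sinh_sq (alphaInv x / 2)
  rw [Qt_eq, Ht_eq]
  field_simp
  nlinarith [hpy]

/-- The kink `H̃` is a zero mode of `L̃u = −u'' − (2/3)Q̃³u` with
a single zero, and `Ĥ(x) = (3x + 2α⁻¹(x))·H̃(x) − 4` is a second, linearly
growing solution with Wronskian `3`. -/
theorem resonance_and_second_solution :
    (∀ x : ℝ, deriv (deriv Ht) x + (2/3) * (Qt x)^3 * Ht x = 0) ∧
    (∀ x : ℝ, (Ht x = 0 ↔ x = 0)) ∧
    (∀ x : ℝ,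
      deriv (deriv (fun y => (3 * y + 2 * alphaInv y) * Ht y - 4)) x
        + (2/3) * (Qt x)^3 * ((3 * x + 2 * alphaInv x) * Ht x - 4) = 0) ∧
    (∀ x : ℝ,
      Ht x * deriv (fun y => (3 * y + 2 * alphaInv y) * Ht y - 4) x
        - ((3 * x + 2 * alphaInv x) * Ht x - 4) * deriv Ht x = 3) ∧
    Filter.Tendsto (fun x => (3 * x + 2 * alphaInv x) * Ht x - 4)
      Filter.atTop Filter.atTop := by
  have hdHt : deriv Ht = fun x => (Qt x)^2/3 := funext fun x => (Ht_hasDerivAt x).deriv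
  have hdHt2 : ∀ x, HasDerivAt (fun y => (Qt y)^2/3) (2 * Qt x * (-((Qt x)^2 * Ht x)) / 3) x := by
    intro x
    simpa using (((Qt_hasDerivAt x).pow 2).div_const 3)
  -- F and its derivatives
  set F : ℝ → ℝ := fun y => (3 * y + 2 * alphaInv y) * Ht y - 4 with hFdef
  have hF : ∀ x, HasDerivAt F ((3 + 2 * Qt x) * Ht x + (3 * x + 2 * alphaInv x) * ((Qt x)^2/3)) x := by
    intro x
    have hlin : HasDerivAt (fun y => 3 * y + 2 * alphaInv y) (3 + 2 * Qt x) x := by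
      simpa using (show HasDerivAt (fun y => 3 * y + 2 * alphaInv y) (3 * 1 + 2 * Qt x) x from ((hasDerivAt_id x).const_mul (3:ℝ)).add ((alphaInv_hasDerivAt x).const_mul 2))
    exact (hlin.mul (Ht_hasDerivAt x)).sub_const 4
  have hdF : deriv F = fun x => (3 + 2 * Qt x) * Ht x + (3 * x + 2 * alphaInv x) * ((Qt x)^2/3) :=
    funext fun x => (hF x).deriv
  refine ⟨?_, ?_, ?_, ?_, ?_⟩
  · intro x
    rw [hdHt, (hdHt2 x).deriv]
    ring
  · intro x
    rw [Ht_eq]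
    have hne := cosh_half_ne (alphaInv x)
    constructor
    · intro h
      rcases div_eq_zero_iff.mp h with hs | hc0
      · have : alphaInv x / 2 = 0 := Real.sinh_injective (by simpa using hs)
        have hz : alphaInv x = 0 := by linarith
        have har := alpha_right x
        rw [hz] at har
        simpa [alphaFn] using har.symm
      · exact absurd hc0 hne
    · intro h
      subst h
      have h0 : alphaFn 0 = 0 := by simp [alphaFn]
      have hz : alphaInv 0 = 0 := by
        conv_lhs => rw [← h0]
        exact alpha_left 0
      rw [hz]
      simp
  · intro x
    rw [hdF]
    have hD : HasDerivAt (fun x => (3 + 2 * Qt x) * Ht x + (3 * x + 2 * alphaInv x) * ((Qt x)^2/3))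
        ((2 * (-((Qt x)^2 * Ht x))) * Ht x + (3 + 2 * Qt x) * ((Qt x)^2/3)
          + ((3 + 2 * Qt x) * ((Qt x)^2/3) + (3 * x + 2 * alphaInv x) * (2 * Qt x * (-((Qt x)^2 * Ht x)) / 3))) x := by
      have h1 : HasDerivAt (fun y => 3 + 2 * Qt y) (2 * (-((Qt x)^2 * Ht x))) x := by
        simpa using (((Qt_hasDerivAt x).const_mul (2:ℝ)).const_add 3)
      have h2 : HasDerivAt (fun y => 3 * y + 2 * alphaInv y) (3 + 2 * Qt x) x := by
        simpa using (show HasDerivAt (fun y => 3 * y + 2 * alphaInv y) (3 * 1 + 2 * Qt x) x from ((hasDerivAt_id x).const_mul (3:ℝ)).add ((alphaInv_hasDerivAt x).const_mul 2))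
      exact (h1.mul (Ht_hasDerivAt x)).add (h2.mul (hdHt2 x))
    rw [hD.deriv]
    have hpy := pythag x
    nlinarith [hpy]
  · intro x
    rw [hdF, hdHt]
    have hpy := pythag x
    nlinarith [hpy]
  · -- tendsto
    set T : ℝ := Real.sinh (1/2) / Real.cosh (1/2) with hT
    have hTpos : 0 < T := div_pos (Real.sinh_pos_iff.mpr (by norm_num)) (Real.cosh_pos _)
    have hTle1 : T < 1 := by
      rw [hT, div_lt_one (Real.cosh_pos _)]
      nlinarith [Real.cosh_sq_sub_sinh_sq (1/2 : ℝ), Real.cosh_pos (1/2 : ℝ), Real.sinh_pos_iff.mpr (show (0:ℝ) < 1/2 by norm_num)]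
    apply tendsto_atTop_mono' atTop (f₁ := fun x => 3 * T * x - 4)
    · filter_upwards [eventually_ge_atTop (max (alphaFn 1) 0)] with x hx
      have hx0 : 0 ≤ x := le_trans (le_max_right _ _) hx
      have hg1 : 1 ≤ alphaInv x := by
        by_contra hcon
        push_neg at hcon
        have := alpha_strictMono hcon
        rw [alpha_right] at this
        exact absurd (le_trans (le_max_left _ _) hx) (not_le.mpr this)
      have hHt : T ≤ Ht x := by
        rw [Ht_eq, hT]
        rw [div_le_div_iff₀ (Real.cosh_pos _) (Real.cosh_pos _)]
        have h12 : (1:ℝ)/2 ≤ alphaInv x / 2 := by linarith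
        nlinarith [Real.sinh_nonneg_iff.mpr (by linarith : (0:ℝ) ≤ alphaInv x / 2 - 1/2),
          Real.sinh_sub (alphaInv x / 2) (1/2 : ℝ)]
      have hcoef : 3 * x ≤ 3 * x + 2 * alphaInv x := by linarith
      have hprod : (3 * x) * T ≤ (3 * x + 2 * alphaInv x) * Ht x :=
        mul_le_mul hcoef hHt hTpos.le (by linarith)
      simp only [hFdef]
      nlinarith [hprod]
    · have : Filter.Tendsto (fun x : ℝ => 3 * T * x) atTop atTop :=
        Filter.Tendsto.const_mul_atTop (by linarith) tendsto_id
      exact this.atTop_add tendsto_const_nhds |>.congr (fun x => rfl) |>.mono_left le_rfl
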